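/- Let f : ℝˢ → ℝ be a convex (hence continuous) function and Ω a nonempty closed convex subset of ℝˢ. A point x̄ ∈ Ω minimizes f over Ω (f(x̄) ≤ f(x) for all x ∈ Ω) if and only if there is a subgradient v of f at x̄ (i.e., ⟨v, x − x̄⟩ ≤ f(x) − f(x̄) for all x ∈ ℝˢ) with −v ∈ N(x̄;Ω), that is, 0 ∈ ∂f(x̄) + N(x̄;Ω). -/

import Mathlib

set_option maxHeartbeats 1000000


/-- A point `xbar ∈ Ω` minimizes a convex function `f : ℝˢ → ℝ` over a nonempty
closed convex set `Ω` iff `0 ∈ ∂f(xbar) + N(xbar; Ω)`, i.e. there is a subgradient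
`v` of `f` at `xbar` with `-v` in the normal cone to `Ω` at `xbar`. -/
theorem convex_isMinOn_iff_subgradient_normalCone {s : ℕ}
    (f : EuclideanSpace ℝ (Fin s) → ℝ) (hf : ConvexOn ℝ Set.univ f)
    (Ω : Set (EuclideanSpace ℝ (Fin s)))
    (hΩne : Ω.Nonempty) (hΩcl : IsClosed Ω) (hΩcv : Convex ℝ Ω)
    (xbar : EuclideanSpace ℝ (Fin s)) (hxbar : xbar ∈ Ω) :
    (∀ x ∈ Ω, f xbar ≤ f x) ↔
      ∃ v : EuclideanSpace ℝ (Fin s),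
        (∀ x, (inner ℝ v (x - xbar) : ℝ) ≤ f x - f xbar) ∧
        (∀ x ∈ Ω, (inner ℝ (-v) (x - xbar) : ℝ) ≤ 0) := by
  constructor
  · intro hmin
    -- continuity of f
    have hfc : Continuous f := by
      have := hf.continuousOn isOpen_univ
      rw [← continuousOn_univ]; exact this
    -- shifted function g
    set g : EuclideanSpace ℝ (Fin s) → ℝ := fun x => f (x + xbar) - f xbar with hg
    have hgconv : ∀ (x y : EuclideanSpace ℝ (Fin s)) (a b : ℝ), 0 ≤ a → 0 ≤ b → a + b = 1 →
        g (a • x + b • y) ≤ a * g x + b * g y := by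
      intro x y a b ha hb hab
      have h1 := hf.2 (Set.mem_univ (x + xbar)) (Set.mem_univ (y + xbar)) ha hb hab
      have hx : a • x + b • y + xbar = a • (x + xbar) + b • (y + xbar) := by
        have hb' : b = 1 - a := by linarith
        subst hb'
        module
      have hfb : a * f xbar + b * f xbar = f xbar := by
        rw [← add_mul, hab, one_mul]
      simp only [hg, hx, smul_eq_mul] at *
      linarith
    have hgcont : Continuous g := by
      exact (hfc.comp (continuous_id.add continuous_const)).sub continuous_const
    -- the strict epigraph of g, open and convex
    set A : Set (EuclideanSpace ℝ (Fin s) × ℝ) := {p | g p.1 < p.2} with hA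
    have hAopen : IsOpen A :=
      isOpen_lt (hgcont.comp continuous_fst) continuous_snd
    have hAconv : Convex ℝ A := by
      intro p hp q hq a b ha hb hab
      have hle := hgconv p.1 q.1 a b ha hb hab
      have hp' : g p.1 < p.2 := hp
      have hq' : g q.1 < q.2 := hq
      show g (a • p.1 + b • q.1) < a * p.2 + b * q.2
      rcases eq_or_lt_of_le ha with h | h
      · have hb1 : b = 1 := by linarith
        simp only [← h, hb1, zero_smul, one_smul, zero_add, zero_mul, one_mul] at *
        linarith
      · have h1 : a * g p.1 < a * p.2 := by nlinarith
        have h2 : b * g q.1 ≤ b * q.2 := by nlinarith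
        linarith
    -- the shifted constraint set
    set B : Set (EuclideanSpace ℝ (Fin s) × ℝ) := {p | p.1 + xbar ∈ Ω ∧ p.2 ≤ 0} with hB
    have hBconv : Convex ℝ B := by
      intro p hp q hq a b ha hb hab
      constructor
      · have hx : (a • p + b • q).1 + xbar = a • (p.1 + xbar) + b • (q.1 + xbar) := by
          show a • p.1 + b • q.1 + xbar = _
          have hb' : b = 1 - a := by linarith
          subst hb'
          module
        rw [hx]
        exact hΩcv hp.1 hq.1 ha hb hab
      · have h1 := hp.2; have h2 := hq.2
        show a * p.2 + b * q.2 ≤ 0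
        nlinarith
    have hdisj : Disjoint A B := by
      rw [Set.disjoint_left]
      rintro p hpA ⟨hpΩ, hp0⟩
      have h1 := hmin (p.1 + xbar) hpΩ
      have h2 : (0 : ℝ) ≤ g p.1 := by simp only [hg]; linarith
      have hlt : g p.1 < p.2 := hpA
      linarith
    obtain ⟨L, u, hLA, hLB⟩ := geometric_hahn_banach_open hAconv hAopen hBconv hdisj
    set ψ : EuclideanSpace ℝ (Fin s) →L[ℝ] ℝ :=
      L.comp (ContinuousLinearMap.inl ℝ (EuclideanSpace ℝ (Fin s)) ℝ) with hψ
    set α : ℝ := L (0, 1) with hαdef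
    have hLsplit : ∀ (x : EuclideanSpace ℝ (Fin s)) (t : ℝ), L (x, t) = ψ x + α * t := by
      intro x t
      have hxt : (x, t) = (x, (0 : ℝ)) + t • ((0 : EuclideanSpace ℝ (Fin s)), (1 : ℝ)) := by
        simp [Prod.ext_iff]
      rw [hxt, map_add, map_smul]
      simp only [hψ, hαdef, ContinuousLinearMap.comp_apply, ContinuousLinearMap.inl_apply,
        smul_eq_mul]
      ring
    -- u ≤ 0 from (0,0) ∈ B
    have hule : u ≤ 0 := by
      have h00 : ((0 : EuclideanSpace ℝ (Fin s)), (0 : ℝ)) ∈ B := by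
        refine ⟨?_, le_refl 0⟩
        simpa using hxbar
      have := hLB _ h00
      simpa [Prod.mk_zero_zero] using this
    -- α < 0 from (0,1) ∈ A
    have hα : α < 0 := by
      have h01 : ((0 : EuclideanSpace ℝ (Fin s)), (1 : ℝ)) ∈ A := by
        show g 0 < 1
        simp [hg]
      have := hLA _ h01
      calc α = L (0, 1) := rfl
        _ < u := this
        _ ≤ 0 := hule
    -- 0 ≤ u
    have huge : 0 ≤ u := by
      by_contra h
      push_neg at h
      have ht : (0 : ℝ) < u / (2 * α) := by
        apply div_pos_of_neg_of_neg h
        linarith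
      have hmem : ((0 : EuclideanSpace ℝ (Fin s)), u / (2 * α)) ∈ A := by
        show g 0 < u / (2 * α)
        simpa [hg] using ht
      have hlt := hLA _ hmem
      rw [hLsplit] at hlt
      simp only [map_zero, zero_add] at hlt
      have hα0 : α ≠ 0 := ne_of_lt hα
      have hcalc : α * (u / (2 * α)) = u / 2 := by
        field_simp
      rw [hcalc] at hlt
      linarith
    have hu0 : u = 0 := le_antisymm hule huge
    -- key subgradient inequality
    have key : ∀ x : EuclideanSpace ℝ (Fin s),
        ψ (x - xbar) + α * (f x - f xbar) ≤ 0 := by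
      intro x
      apply le_of_forall_pos_le_add
      intro ε hε
      have hnegα : (0 : ℝ) < -α := by linarith
      have htpos : (0 : ℝ) < ε * (-α)⁻¹ := mul_pos hε (inv_pos.mpr hnegα)
      have hmem : (x - xbar, f x - f xbar + ε * (-α)⁻¹) ∈ A := by
        show g (x - xbar) < _
        simp only [hg, sub_add_cancel]
        linarith
      have hlt := hLA _ hmem
      rw [hLsplit, hu0] at hlt
      have hαε : α * (ε * (-α)⁻¹) = -ε := by
        linear_combination (-ε) * mul_inv_cancel₀ (ne_of_gt hnegα)
      nlinarith [hlt]
    have hnegα : (0 : ℝ) < -α := by linarith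
    -- define v
    set v : EuclideanSpace ℝ (Fin s) :=
      (InnerProductSpace.toDual ℝ (EuclideanSpace ℝ (Fin s))).symm ((-α)⁻¹ • ψ) with hv
    have hinner : ∀ w : EuclideanSpace ℝ (Fin s), (inner ℝ v w : ℝ) = (-α)⁻¹ * ψ w := by
      intro w
      rw [hv, InnerProductSpace.toDual_symm_apply]
      simp [smul_eq_mul]
    refine ⟨v, ?_, ?_⟩
    · intro x
      rw [hinner]
      have hk := key x
      have hinvpos : (0 : ℝ) < (-α)⁻¹ := inv_pos.mpr hnegα
      have hψle : ψ (x - xbar) ≤ (-α) * (f x - f xbar) := by nlinarith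
      calc (-α)⁻¹ * ψ (x - xbar) ≤ (-α)⁻¹ * ((-α) * (f x - f xbar)) := by nlinarith
        _ = f x - f xbar := by
            rw [← mul_assoc, inv_mul_cancel₀ (ne_of_gt hnegα), one_mul]
    · intro x hx
      have hmem : (x - xbar, (0 : ℝ)) ∈ B := by
        refine ⟨?_, le_refl 0⟩
        simpa [sub_add_cancel] using hx
      have hge := hLB _ hmem
      rw [hLsplit, hu0] at hge
      simp only [mul_zero, add_zero] at hge
      rw [inner_neg_left, hinner]
      simp only [neg_nonpos]
      positivity
  · rintro ⟨v, h1, h2⟩ x hx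
    have ha := h1 x
    have h2' := h2 x hx
    rw [inner_neg_left] at h2'
    linarith
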